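/- The Gaussian curvature of the Riemannian metric g = cosh(r) dr² + (sinh²(r)/cosh(r)) dθ² on the (r,θ) half-plane r > 0 equals G(r,θ) = 1/cosh³(r), which is positive and bounded by 1. -/

import Mathlib

open Real

/-- Gaussian curvature of the diagonal metric `E dr² + G dθ²` with `E, G` depending
only on `r`, given by the classical formula `K = -(1/√(EG)) ∂_r((∂_r √G)/√E)`. -/
noncomputable def gaussCurvature (E G : ℝ → ℝ) (r : ℝ) : ℝ :=
  -(1 / Real.sqrt (E r * G r)) *
    deriv (fun s => deriv (fun u => Real.sqrt (G u)) s / Real.sqrt (E s)) r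

private lemma sqrtG_eq {u : ℝ} (hu : 0 < u) :
    Real.sqrt ((Real.sinh u) ^ 2 / Real.cosh u) = Real.sinh u / Real.sqrt (Real.cosh u) := by
  rw [Real.sqrt_div (sq_nonneg _), Real.sqrt_sq (Real.sinh_pos_iff.mpr hu).le]

private lemma hasDeriv_sqrtG {u : ℝ} (hu : 0 < u) :
    HasDerivAt (fun v => Real.sqrt ((Real.sinh v) ^ 2 / Real.cosh v))
      ((Real.cosh u * Real.sqrt (Real.cosh u)
        - Real.sinh u * (1 / (2 * Real.sqrt (Real.cosh u)) * Real.sinh u))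
        / (Real.sqrt (Real.cosh u)) ^ 2) u := by
  have hc : (0:ℝ) < Real.cosh u := Real.cosh_pos u
  have hsc : (0:ℝ) < Real.sqrt (Real.cosh u) := Real.sqrt_pos.mpr hc
  have hbot : HasDerivAt (fun v => Real.sqrt (Real.cosh v))
      (1 / (2 * Real.sqrt (Real.cosh u)) * Real.sinh u) u :=
    (Real.hasDerivAt_sqrt hc.ne').comp u (Real.hasDerivAt_cosh u)
  have h := (Real.hasDerivAt_sinh u).div hbot hsc.ne'
  refine h.congr_of_eventuallyEq ?_
  filter_upwards [Ioi_mem_nhds hu] with v hv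
  exact sqrtG_eq hv

/-- On `Ioi 0`, the inner function equals `1 - sinh²/(2 cosh²)`. -/
private lemma inner_eq {u : ℝ} (hu : 0 < u) :
    deriv (fun v => Real.sqrt ((Real.sinh v) ^ 2 / Real.cosh v)) u / Real.sqrt (Real.cosh u)
      = 1 - (Real.sinh u) ^ 2 / (2 * (Real.cosh u) ^ 2) := by
  have hc : (0:ℝ) < Real.cosh u := Real.cosh_pos u
  have hsc : (0:ℝ) < Real.sqrt (Real.cosh u) := Real.sqrt_pos.mpr hc
  have hsq : Real.sqrt (Real.cosh u) ^ 2 = Real.cosh u := Real.sq_sqrt hc.le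
  rw [(hasDeriv_sqrtG hu).deriv]
  field_simp
  linear_combination ((Real.sinh u ^ 2 - 2 * Real.cosh u ^ 2) * Real.sqrt (Real.cosh u) ^ 2 + Real.cosh u * Real.sinh u ^ 2) * hsq

theorem stmt_7 (r : ℝ) (hr : 0 < r) :
    gaussCurvature (fun s => Real.cosh s) (fun s => (Real.sinh s) ^ 2 / Real.cosh s) r
        = 1 / (Real.cosh r) ^ 3 ∧
      0 < (1 : ℝ) / (Real.cosh r) ^ 3 ∧ (1 : ℝ) / (Real.cosh r) ^ 3 ≤ 1 := by
  have hc : (0:ℝ) < Real.cosh r := Real.cosh_pos r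
  have hs : (0:ℝ) < Real.sinh r := Real.sinh_pos_iff.mpr hr
  have hid : Real.cosh r ^ 2 - Real.sinh r ^ 2 = 1 := Real.cosh_sq_sub_sinh_sq r
  refine ⟨?_, by positivity, ?_⟩
  · unfold gaussCurvature
    -- √(E*G) = sinh r
    have hEG : Real.cosh r * ((Real.sinh r) ^ 2 / Real.cosh r) = (Real.sinh r) ^ 2 := by
      field_simp
    -- derivative of the inner function
    have hg : HasDerivAt (fun s => 1 - (Real.sinh s) ^ 2 / (2 * (Real.cosh s) ^ 2))
        (-(((2 : ℕ) * Real.sinh r ^ 1 * Real.cosh r * (2 * Real.cosh r ^ 2)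
          - Real.sinh r ^ 2 * (2 * ((2 : ℕ) * Real.cosh r ^ 1 * Real.sinh r)))
            / (2 * Real.cosh r ^ 2) ^ 2)) r := by
      have h1 : HasDerivAt (fun s => (Real.sinh s) ^ 2)
          ((2 : ℕ) * Real.sinh r ^ 1 * Real.cosh r) r := (Real.hasDerivAt_sinh r).pow 2
      have h2 : HasDerivAt (fun s => 2 * (Real.cosh s) ^ 2)
          (2 * ((2 : ℕ) * Real.cosh r ^ 1 * Real.sinh r)) r :=
        ((Real.hasDerivAt_cosh r).pow 2).const_mul 2
      exact (h1.div h2 (by positivity)).const_sub 1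
    have hderiv : deriv (fun s =>
        deriv (fun u => Real.sqrt ((Real.sinh u) ^ 2 / Real.cosh u)) s
          / Real.sqrt (Real.cosh s)) r
        = -(((2 : ℕ) * Real.sinh r ^ 1 * Real.cosh r * (2 * Real.cosh r ^ 2)
          - Real.sinh r ^ 2 * (2 * ((2 : ℕ) * Real.cosh r ^ 1 * Real.sinh r)))
            / (2 * Real.cosh r ^ 2) ^ 2) := by
      have heq : (fun s =>
          deriv (fun u => Real.sqrt ((Real.sinh u) ^ 2 / Real.cosh u)) s
            / Real.sqrt (Real.cosh s))
          =ᶠ[nhds r] (fun s => 1 - (Real.sinh s) ^ 2 / (2 * (Real.cosh s) ^ 2)) := by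
        filter_upwards [Ioi_mem_nhds hr] with v hv
        exact inner_eq hv
      rw [heq.deriv_eq, hg.deriv]
    simp only [hEG, hderiv, Real.sqrt_sq hs.le]
    field_simp
    linear_combination 2 * hid
  · rw [div_le_one (by positivity)]
    nlinarith [Real.one_le_cosh r, hc]
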